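/- Let G be a compact Hausdorff topological group, and let μ and ν be irreducible continuous unitary representations of G on finite-dimensional complex Hilbert spaces V^μ and V^ν respectively. Equip V^μ ⊗ V^ν with the inner product determined by ⟨a ⊗ b, a' ⊗ b'⟩ = ⟨a, a'⟩⟨b, b'⟩ and with the tensor product representation (μ ⊗ ν)(x) = μ(x) ⊗ ν(x). Let H be a minimal nontrivial invariant subspace of V^μ ⊗ V^ν whose subrepresentation occurs with multiplicity one in μ ⊗ ν, let P_H be the orthogonal projection of V^μ ⊗ V^ν onto H, and let {e_ℓ : 1 ≤ ℓ ≤ dim V^ν} be an orthonormal basis of V^ν. Then for every v ∈ V^μ, ∑_{ℓ=1}^{dim V^ν} ‖P_H(v ⊗ e_ℓ)‖² = (dim_ℂ H / dim_ℂ V^μ) · ‖v‖². -/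

import Mathlib

local notation "⟪" x ", " y "⟫" => @inner ℂ _ _ x y

/-- A submodule is invariant under a unitary representation. -/
def Invariant {G V : Type*} [Group G] [NormedAddCommGroup V] [InnerProductSpace ℂ V]
    (π : G →* (V ≃ₗᵢ[ℂ] V)) (H : Submodule ℂ V) : Prop :=
  ∀ (x : G) (v : V), v ∈ H → π x v ∈ H

/-- A submodule is a minimal nontrivial invariant subspace. -/
def MinimalInvariant {G V : Type*} [Group G] [NormedAddCommGroup V] [InnerProductSpace ℂ V]
    (π : G →* (V ≃ₗᵢ[ℂ] V)) (H : Submodule ℂ V) : Prop :=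
  H ≠ ⊥ ∧ ∀ H' : Submodule ℂ V, Invariant π H' → H' ≤ H → H' = ⊥ ∨ H' = H

/-- A representation is irreducible. -/
def Irreducible' {G V : Type*} [Group G] [NormedAddCommGroup V] [InnerProductSpace ℂ V]
    (π : G →* (V ≃ₗᵢ[ℂ] V)) : Prop :=
  (⊤ : Submodule ℂ V) ≠ ⊥ ∧ ∀ H : Submodule ℂ V, Invariant π H → H = ⊥ ∨ H = ⊤

/-- There is a `G`-equivariant unitary isomorphism between the invariant subspaces
`H` and `H'`. -/
def EquivariantUnitaryIso {G V : Type*} [Group G] [NormedAddCommGroup V]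
    [InnerProductSpace ℂ V] (π : G →* (V ≃ₗᵢ[ℂ] V)) (H H' : Submodule ℂ V) : Prop :=
  ∃ U : H ≃ₗᵢ[ℂ] H', ∀ (x : G) (v w : H), (w : V) = π x (v : V) →
    ((U w : V)) = π x ((U v : V))

/-- The subrepresentation on the minimal invariant subspace `H` occurs with multiplicity one. -/
def MultiplicityOne {G V : Type*} [Group G] [NormedAddCommGroup V] [InnerProductSpace ℂ V]
    (π : G →* (V ≃ₗᵢ[ℂ] V)) (H : Submodule ℂ V) : Prop :=
  ∀ H' : Submodule ℂ V, Invariant π H' → MinimalInvariant π H' →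
    EquivariantUnitaryIso π H H' → H' = H

lemma trace_onb {V : Type*} [NormedAddCommGroup V] [InnerProductSpace ℂ V]
    [FiniteDimensional ℂ V] {ι : Type*} [Fintype ι] [DecidableEq ι]
    (b : OrthonormalBasis ι ℂ V) (T : V →ₗ[ℂ] V) :
    LinearMap.trace ℂ V T = ∑ i, ⟪b i, T (b i)⟫ := by
  rw [LinearMap.trace_eq_matrix_trace ℂ b.toBasis, Matrix.trace]
  congr 1
  ext i
  rw [Matrix.diag_apply, LinearMap.toMatrix_apply, b.coe_toBasis,
    b.coe_toBasis_repr_apply, b.repr_apply_apply]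

lemma proj_comm {G V : Type*} [Group G] [NormedAddCommGroup V] [InnerProductSpace ℂ V]
    [FiniteDimensional ℂ V] (ρ : G →* (V ≃ₗᵢ[ℂ] V)) (H : Submodule ℂ V)
    (hH : Invariant ρ H) (x : G) (w : V) :
    (Submodule.orthogonalProjectionOnto H (ρ x w) : V) = ρ x (Submodule.orthogonalProjectionOnto H w) := by
  apply Submodule.eq_starProjection_of_mem_of_inner_eq_zero
  · exact hH x _ (Submodule.orthogonalProjectionOnto H w).2
  · intro u hu
    have hu' : ρ x⁻¹ u ∈ H := hH x⁻¹ u hu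
    have h1 : ρ x (ρ x⁻¹ u) = u := by
      have : ρ x * ρ x⁻¹ = 1 := by rw [← map_mul, mul_inv_cancel, map_one]
      calc ρ x (ρ x⁻¹ u) = (ρ x * ρ x⁻¹) u := rfl
        _ = u := by rw [this]; rfl
    calc ⟪ρ x w - ρ x (Submodule.orthogonalProjectionOnto H w), u⟫
        = ⟪ρ x (w - Submodule.orthogonalProjectionOnto H w), ρ x (ρ x⁻¹ u)⟫ := by rw [map_sub, h1]
      _ = ⟪w - Submodule.orthogonalProjectionOnto H w, ρ x⁻¹ u⟫ := (ρ x).inner_map_map _ _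
      _ = 0 := Submodule.starProjection_inner_eq_zero w _ hu'

lemma schur {G V : Type*} [Group G] [NormedAddCommGroup V] [InnerProductSpace ℂ V]
    [FiniteDimensional ℂ V]
    (μ : G →* (V ≃ₗᵢ[ℂ] V))
    (hirr : Irreducible' μ)
    (T : V →ₗ[ℂ] V) (hT : ∀ (x : G) (v : V), T (μ x v) = μ x (T v)) :
    ∃ c : ℂ, ∀ v, T v = c • v := by
  have hnt : Nontrivial V := by
    by_contra h
    rw [not_nontrivial_iff_subsingleton] at h
    exact hirr.1 (Subsingleton.elim _ _)
  obtain ⟨c, hc⟩ := Module.End.exists_eigenvalue (T : Module.End ℂ V)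
  have hinv : Invariant μ (Module.End.eigenspace (T : Module.End ℂ V) c) := by
    intro x v hv
    rw [Module.End.mem_eigenspace_iff] at hv ⊢
    show T (μ x v) = c • μ x v
    rw [hT, hv, map_smul]
  rcases hirr.2 _ hinv with h | h
  · exact absurd h hc
  · refine ⟨c, fun v => ?_⟩
    have : v ∈ Module.End.eigenspace (T : Module.End ℂ V) c := h ▸ Submodule.mem_top
    rwa [Module.End.mem_eigenspace_iff] at this

/-- **Clebsch–Gordan type lemma.**  Let `μrep` and `νrep` be irreducible continuous unitary
representations of a compact group `G` on finite-dimensional complex Hilbert spaces `Vμ`, `Vν`.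
The Hilbert space tensor product `Vμ ⊗ Vν` is encoded as a finite-dimensional Hilbert
space `W` together with a bilinear map `t : Vμ → Vν → W` whose image spans `W` and which
multiplies inner products, carrying the tensor product representation `ρ`.  If `H` is a
minimal nontrivial invariant subspace of `W` occurring with multiplicity one in `ρ`, `P_H` is
the orthogonal projection onto `H`, and `(e ℓ)` is an orthonormal basis of `Vν`, then
`∑ ℓ, ‖P_H (v ⊗ e ℓ)‖² = (dim H / dim Vμ) · ‖v‖²` for all `v ∈ Vμ`. -/
theorem tensor_multiplicity_one_projection_sum
    {G Vμ Vν W : Type*} [Group G] [TopologicalSpace G] [IsTopologicalGroup G] [CompactSpace G]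
    [T2Space G]
    [NormedAddCommGroup Vμ] [InnerProductSpace ℂ Vμ] [FiniteDimensional ℂ Vμ]
    [NormedAddCommGroup Vν] [InnerProductSpace ℂ Vν] [FiniteDimensional ℂ Vν]
    [NormedAddCommGroup W] [InnerProductSpace ℂ W] [FiniteDimensional ℂ W]
    (μrep : G →* (Vμ ≃ₗᵢ[ℂ] Vμ)) (hμcont : ∀ v : Vμ, Continuous fun x => μrep x v)
    (hμirr : Irreducible' μrep)
    (νrep : G →* (Vν ≃ₗᵢ[ℂ] Vν)) (hνcont : ∀ v : Vν, Continuous fun x => νrep x v)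
    (hνirr : Irreducible' νrep)
    (t : Vμ →ₗ[ℂ] Vν →ₗ[ℂ] W)
    (ht_inner : ∀ (a a' : Vμ) (b b' : Vν), ⟪t a b, t a' b'⟫ = ⟪a, a'⟫ * ⟪b, b'⟫)
    (ht_span : Submodule.span ℂ {w : W | ∃ a b, t a b = w} = ⊤)
    (ρ : G →* (W ≃ₗᵢ[ℂ] W))
    (hρ : ∀ (x : G) (a : Vμ) (b : Vν), ρ x (t a b) = t (μrep x a) (νrep x b))
    (H : Submodule ℂ W) (hHinv : Invariant ρ H) (hHmin : MinimalInvariant ρ H)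
    (hHmult : MultiplicityOne ρ H)
    (e : OrthonormalBasis (Fin (Module.finrank ℂ Vν)) ℂ Vν) (v : Vμ) :
    ∑ ℓ, ‖(Submodule.orthogonalProjectionOnto H (t v (e ℓ)) : W)‖ ^ 2
      = ((Module.finrank ℂ H : ℝ) / (Module.finrank ℂ Vμ : ℝ)) * ‖v‖ ^ 2 := by
  classical
  let n := Module.finrank ℂ Vν
  let Pc : W →ₗ[ℂ] W := H.subtype ∘ₗ (Submodule.orthogonalProjectionOnto H : W →L[ℂ] H).toLinearMap
  have hPc : ∀ w : W, Pc w = (Submodule.orthogonalProjectionOnto H w : W) := fun w => rfl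
  have hPcmem : ∀ w : W, Pc w ∈ H := fun w => (Submodule.orthogonalProjectionOnto H w).2
  have hPP : ∀ a b : W, ⟪Pc a, Pc b⟫ = ⟪a, Pc b⟫ := by
    intro a b
    have h0 : ⟪a - Pc a, Pc b⟫ = 0 :=
      Submodule.starProjection_inner_eq_zero a (Pc b) (hPcmem b)
    rw [inner_sub_left, sub_eq_zero] at h0
    exact h0.symm
  have hPP' : ∀ a b : W, ⟪Pc a, Pc b⟫ = ⟪Pc a, b⟫ := by
    intro a b
    have h0 : ⟪b - Pc b, Pc a⟫ = 0 :=
      Submodule.starProjection_inner_eq_zero b (Pc a) (hPcmem a)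
    rw [inner_eq_zero_symm, inner_sub_right, sub_eq_zero] at h0
    exact h0.symm
  have hPρ : ∀ (x : G) (w : W), Pc (ρ x w) = ρ x (Pc w) := fun x w =>
    proj_comm ρ H hHinv x w
  -- the operator T
  let A : Fin n → (Vμ →ₗ[ℂ] W) := fun ℓ => Pc ∘ₗ (t.flip (e ℓ))
  let T : Vμ →ₗ[ℂ] Vμ := ∑ ℓ, (LinearMap.adjoint (A ℓ)) ∘ₗ A ℓ
  have hTinner : ∀ a b : Vμ, ⟪a, T b⟫ = ∑ ℓ, ⟪Pc (t a (e ℓ)), t b (e ℓ)⟫ := by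
    intro a b
    have : T b = ∑ ℓ, LinearMap.adjoint (A ℓ) (A ℓ b) := by
      simp [T, LinearMap.sum_apply]
    rw [this, inner_sum]
    refine Finset.sum_congr rfl fun ℓ _ => ?_
    rw [LinearMap.adjoint_inner_right]
    show ⟪Pc (t a (e ℓ)), Pc (t b (e ℓ))⟫ = _
    rw [hPP']
  -- basis change invariance
  have hbc : ∀ (b f : OrthonormalBasis (Fin n) ℂ Vν) (a a' : Vμ),
      ∑ ℓ, ⟪Pc (t a (b ℓ)), t a' (b ℓ)⟫ = ∑ ℓ, ⟪Pc (t a (f ℓ)), t a' (f ℓ)⟫ := by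
    intro b f a a'
    let C : Vν →ₗ[ℂ] W := Pc ∘ₗ (t a)
    let M : Vν →ₗ[ℂ] Vν := (LinearMap.adjoint C) ∘ₗ (t a')
    have key : ∀ g : OrthonormalBasis (Fin n) ℂ Vν,
        ∑ ℓ, ⟪Pc (t a (g ℓ)), t a' (g ℓ)⟫ = LinearMap.trace ℂ Vν M := by
      intro g
      rw [trace_onb g M]
      refine Finset.sum_congr rfl fun ℓ _ => ?_
      show ⟪Pc (t a (g ℓ)), t a' (g ℓ)⟫ = ⟪g ℓ, (LinearMap.adjoint C) ((t a') (g ℓ))⟫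
      rw [LinearMap.adjoint_inner_right]
      rfl
    rw [key b, key f]
  -- T commutes with μrep
  have hcomm : ∀ (x : G) (b : Vμ), T (μrep x b) = μrep x (T b) := by
    intro x b
    apply ext_inner_left ℂ
    intro u
    have hu : μrep x ((μrep x).symm u) = u := (μrep x).apply_symm_apply u
    set a := (μrep x).symm u with ha
    rw [← hu]
    calc ⟪μrep x a, T (μrep x b)⟫
        = ∑ ℓ, ⟪Pc (t (μrep x a) (e ℓ)), t (μrep x b) (e ℓ)⟫ := hTinner _ _
      _ = ∑ ℓ, ⟪Pc (t (μrep x a) ((e.map (νrep x)) ℓ)),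
            t (μrep x b) ((e.map (νrep x)) ℓ)⟫ := hbc e (e.map (νrep x)) _ _
      _ = ∑ ℓ, ⟪Pc (t a (e ℓ)), t b (e ℓ)⟫ := by
          refine Finset.sum_congr rfl fun ℓ _ => ?_
          rw [OrthonormalBasis.map_apply, ← hρ, ← hρ, hPρ, (ρ x).inner_map_map]
      _ = ⟪a, T b⟫ := (hTinner _ _).symm
      _ = ⟪μrep x a, μrep x (T b)⟫ := ((μrep x).inner_map_map _ _).symm
  obtain ⟨c, hc⟩ := schur μrep hμirr T hcomm
  have hnt : Nontrivial Vμ := by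
    by_contra h
    rw [not_nontrivial_iff_subsingleton] at h
    exact hμirr.1 (Subsingleton.elim _ _)
  -- quadratic form identity
  have hTnorm : ∀ a : Vμ,
      ⟪a, T a⟫ = ((∑ ℓ, ‖Pc (t a (e ℓ))‖ ^ 2 : ℝ) : ℂ) := by
    intro a
    rw [hTinner]
    push_cast
    refine Finset.sum_congr rfl fun ℓ _ => ?_
    rw [← hPP', inner_self_eq_norm_sq_to_K]
    norm_cast
  -- trace of T two ways
  let f := stdOrthonormalBasis ℂ Vμ
  let wb : Fin (Module.finrank ℂ Vμ) × Fin n → W := fun p => t (f p.1) (e p.2)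
  have horth : Orthonormal ℂ wb := by
    rw [orthonormal_iff_ite]
    intro i j
    show ⟪t (f i.1) (e i.2), t (f j.1) (e j.2)⟫ = _
    rw [ht_inner, orthonormal_iff_ite.mp f.orthonormal, orthonormal_iff_ite.mp e.orthonormal]
    by_cases h1 : i.1 = j.1 <;> by_cases h2 : i.2 = j.2 <;>
      simp [h1, h2, Prod.ext_iff]
  have hspan : ⊤ ≤ Submodule.span ℂ (Set.range wb) := by
    rw [← ht_span]
    refine Submodule.span_le.mpr ?_
    have step1 : ∀ (a : Vμ) (ℓ : Fin n), (t a) (e ℓ) ∈ Submodule.span ℂ (Set.range wb) := by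
      intro a ℓ
      rw [← f.sum_repr a, map_sum, LinearMap.sum_apply]
      refine Submodule.sum_mem _ fun k _ => ?_
      rw [map_smul, LinearMap.smul_apply]
      exact Submodule.smul_mem _ _ (Submodule.subset_span ⟨(k, ℓ), rfl⟩)
    rintro _ ⟨a, b, rfl⟩
    rw [← e.sum_repr b, map_sum]
    refine Submodule.sum_mem _ fun ℓ _ => ?_
    rw [map_smul]
    exact Submodule.smul_mem _ _ (step1 a ℓ)
  let wB : OrthonormalBasis (Fin (Module.finrank ℂ Vμ) × Fin n) ℂ W :=
    (Module.Basis.mk horth.linearIndependent hspan).toOrthonormalBasis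
      (by rwa [Module.Basis.coe_mk])
  have hwB : ∀ p, wB p = wb p := fun p => by
    simp [wB, Module.Basis.coe_toOrthonormalBasis, Module.Basis.coe_mk]
  have htrPc : LinearMap.trace ℂ W Pc = (Module.finrank ℂ H : ℂ) := by
    have h1 : ((Submodule.orthogonalProjectionOnto H : W →L[ℂ] H).toLinearMap ∘ₗ H.subtype
        : H →ₗ[ℂ] H) = LinearMap.id := by
      apply LinearMap.ext
      intro h
      simp only [LinearMap.coe_comp, Function.comp_apply, ContinuousLinearMap.coe_coe,
        Submodule.coe_subtype, LinearMap.id_coe, id_eq]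
      exact Submodule.orthogonalProjectionOnto_mem_subspace_eq_self h
    rw [show (Pc : W →ₗ[ℂ] W) = H.subtype ∘ₗ (Submodule.orthogonalProjectionOnto H : W →L[ℂ] H).toLinearMap
        from rfl, LinearMap.trace_comp_comm', h1, LinearMap.trace_id]
  have htrT : LinearMap.trace ℂ Vμ T = (Module.finrank ℂ H : ℂ) := by
    rw [trace_onb f T, ← htrPc, trace_onb wB Pc]
    rw [Fintype.sum_prod_type]
    refine Finset.sum_congr rfl fun k _ => ?_
    rw [hTinner]
    refine Finset.sum_congr rfl fun ℓ _ => ?_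
    rw [hwB]
    show ⟪Pc (t (f k) (e ℓ)), t (f k) (e ℓ)⟫ = ⟪t (f k) (e ℓ), Pc (t (f k) (e ℓ))⟫
    rw [← hPP', hPP]
  have hTsmul : T = c • LinearMap.id := LinearMap.ext fun a => by
    rw [hc a]; rfl
  have htr2 : LinearMap.trace ℂ Vμ T = c * (Module.finrank ℂ Vμ : ℂ) := by
    rw [hTsmul, map_smul, LinearMap.trace_id, smul_eq_mul]
  have hdim : (Module.finrank ℂ Vμ : ℂ) ≠ 0 := by
    have : 0 < Module.finrank ℂ Vμ := Module.finrank_pos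
    exact_mod_cast this.ne'
  have hcval : c = (Module.finrank ℂ H : ℂ) / (Module.finrank ℂ Vμ : ℂ) := by
    rw [eq_div_iff hdim, ← htr2, htrT]
  -- conclude
  have key : ((∑ ℓ, ‖Pc (t v (e ℓ))‖ ^ 2 : ℝ) : ℂ)
      = ((Module.finrank ℂ H : ℝ) / (Module.finrank ℂ Vμ : ℝ) * ‖v‖ ^ 2 : ℝ) := by
    rw [← hTnorm v, hc v, inner_smul_right, inner_self_eq_norm_sq_to_K, hcval]
    have hco : (@RCLike.ofReal ℂ _ ‖v‖) = Complex.ofReal ‖v‖ := rfl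
    rw [hco]
    push_cast
    ring
  have final : ∑ ℓ, ‖Pc (t v (e ℓ))‖ ^ 2
      = (Module.finrank ℂ H : ℝ) / (Module.finrank ℂ Vμ : ℝ) * ‖v‖ ^ 2 :=
    Complex.ofReal_injective key
  simpa only [hPc] using final
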